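/- Let G be the simple graph whose vertex set is {1,2,3,4,5,6} × {+,−}, in which a vertex (i,+) is adjacent to a vertex (j,−) if and only if the pair (i,j) or the pair (j,i) belongs to E = {(1,2),(1,6),(1,4),(2,3),(2,5),(3,6),(3,4),(4,5),(5,6)}, and there are no other edges. Then G has exactly two connected components, namely {(1,+),(3,+),(5,+),(2,−),(4,−),(6,−)} and {(2,+),(4,+),(6,+),(1,−),(3,−),(5,−)}. -/

import Mathlib

/-- The set `E` of pairs, where the pair `(i, j)` indicates that the vertex `(i, +)`
is adjacent to the vertex `(j, −)`. -/
def gluingPairs : Set (ℕ × ℕ) :=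
  {(1,2), (1,6), (1,4), (2,3), (2,5), (3,6), (3,4), (4,5), (5,6)}

/-- The gluing graph `G` on the vertex set `{1,…,6} × {+,−}`: vertices are encoded as
pairs `(v, s) : Fin 6 × Bool`, where `v : Fin 6` stands for the label `v + 1 ∈ {1,…,6}`
and `s = true` stands for `+`, `s = false` for `−`.  A vertex `(i, +)` is adjacent to a
vertex `(j, −)` if and only if `(i, j) ∈ E` or `(j, i) ∈ E`, and there are no other
edges. -/
def gluingGraph : SimpleGraph (Fin 6 × Bool) where
  Adj v w := v.2 ≠ w.2 ∧
    (((v.1 : ℕ) + 1, (w.1 : ℕ) + 1) ∈ gluingPairs ∨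
      ((w.1 : ℕ) + 1, (v.1 : ℕ) + 1) ∈ gluingPairs)
  symm := ⟨fun v w h => ⟨Ne.symm h.1, h.2.symm⟩⟩
  loopless := ⟨fun v h => h.1 rfl⟩

/-- The first claimed connected component `{(1,+), (3,+), (5,+), (2,−), (4,−), (6,−)}`. -/
def component₁ : Set (Fin 6 × Bool) :=
  {p | ((p.1 : ℕ) + 1, p.2) ∈
    ({(1, true), (3, true), (5, true), (2, false), (4, false), (6, false)} :
      Set (ℕ × Bool))}

/-- The second claimed connected component `{(2,+), (4,+), (6,+), (1,−), (3,−), (5,−)}`. -/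
def component₂ : Set (Fin 6 × Bool) :=
  {p | ((p.1 : ℕ) + 1, p.2) ∈
    ({(2, true), (4, true), (6, true), (1, false), (3, false), (5, false)} :
      Set (ℕ × Bool))}

/-- The gluing graph has exactly two connected components, namely
`{(1,+),(3,+),(5,+),(2,−),(4,−),(6,−)}` and `{(2,+),(4,+),(6,+),(1,−),(3,−),(5,−)}`:
these two sets are disjoint, cover all vertices, and two vertices are joined by a path
in `G` if and only if they lie in the same one of the two sets. -/

instance : DecidablePred (· ∈ gluingPairs) := fun p =>
  decidable_of_iff
    (p ∈ ({(1,2), (1,6), (1,4), (2,3), (2,5), (3,6), (3,4), (4,5), (5,6)} : Finset (ℕ × ℕ)))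
    (by simp [gluingPairs])

instance : DecidableRel gluingGraph.Adj := fun v w => by
  unfold gluingGraph; exact inferInstanceAs (Decidable (v.2 ≠ w.2 ∧ (((v.1 : ℕ) + 1, (w.1 : ℕ) + 1) ∈ gluingPairs ∨ ((w.1 : ℕ) + 1, (v.1 : ℕ) + 1) ∈ gluingPairs)))

instance : DecidablePred (· ∈ component₁) := fun p =>
  decidable_of_iff
    (((p.1 : ℕ) + 1, p.2) ∈
      ({(1, true), (3, true), (5, true), (2, false), (4, false), (6, false)} :
        Finset (ℕ × Bool)))
    (by simp [component₁])

instance : DecidablePred (· ∈ component₂) := fun p =>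
  decidable_of_iff
    (((p.1 : ℕ) + 1, p.2) ∈
      ({(2, true), (4, true), (6, true), (1, false), (3, false), (5, false)} :
        Finset (ℕ × Bool)))
    (by simp [component₂])

lemma adj_pres : ∀ v w : Fin 6 × Bool, gluingGraph.Adj v w →
    (v ∈ component₁ ↔ w ∈ component₁) := by decide

lemma reach_hub₁ : ∀ v ∈ component₁, gluingGraph.Reachable v ((0 : Fin 6), true) := by
  have h1 : gluingGraph.Adj ((0 : Fin 6), true) ((1 : Fin 6), false) := by decide
  have h3 : gluingGraph.Adj ((0 : Fin 6), true) ((3 : Fin 6), false) := by decide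
  have h5 : gluingGraph.Adj ((0 : Fin 6), true) ((5 : Fin 6), false) := by decide
  have h25 : gluingGraph.Adj ((2 : Fin 6), true) ((5 : Fin 6), false) := by decide
  have h45 : gluingGraph.Adj ((4 : Fin 6), true) ((5 : Fin 6), false) := by decide
  intro v hv
  fin_cases v <;>
    first
      | exact absurd hv (by decide)
      | exact SimpleGraph.Reachable.refl _
      | exact (SimpleGraph.Adj.reachable (by assumption)).symm
      | exact ((SimpleGraph.Adj.reachable h25).trans
          (SimpleGraph.Adj.reachable h5).symm)
      | exact ((SimpleGraph.Adj.reachable h45).trans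
          (SimpleGraph.Adj.reachable h5).symm)

lemma reach_hub₂ : ∀ v ∈ component₂, gluingGraph.Reachable v ((1 : Fin 6), true) := by
  have h0 : gluingGraph.Adj ((1 : Fin 6), true) ((0 : Fin 6), false) := by decide
  have h2 : gluingGraph.Adj ((1 : Fin 6), true) ((2 : Fin 6), false) := by decide
  have h4 : gluingGraph.Adj ((1 : Fin 6), true) ((4 : Fin 6), false) := by decide
  have h32 : gluingGraph.Adj ((3 : Fin 6), true) ((2 : Fin 6), false) := by decide
  have h54 : gluingGraph.Adj ((5 : Fin 6), true) ((4 : Fin 6), false) := by decide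
  intro v hv
  fin_cases v <;>
    first
      | exact absurd hv (by decide)
      | exact SimpleGraph.Reachable.refl _
      | exact (SimpleGraph.Adj.reachable (by assumption)).symm
      | exact ((SimpleGraph.Adj.reachable h32).trans
          (SimpleGraph.Adj.reachable h2).symm)
      | exact ((SimpleGraph.Adj.reachable h54).trans
          (SimpleGraph.Adj.reachable h4).symm)

lemma cover : ∀ v : Fin 6 × Bool, v ∈ component₁ ∨ v ∈ component₂ := by decide

lemma disj : ∀ v : Fin 6 × Bool, ¬(v ∈ component₁ ∧ v ∈ component₂) := by decide

theorem gluingGraph_two_components :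
    component₁ ∪ component₂ = Set.univ ∧
    component₁ ∩ component₂ = ∅ ∧
    ∀ v w : Fin 6 × Bool,
      gluingGraph.Reachable v w ↔
        ((v ∈ component₁ ∧ w ∈ component₁) ∨ (v ∈ component₂ ∧ w ∈ component₂)) := by

  refine ⟨?_, ?_, ?_⟩
  · ext v; simpa using cover v
  · ext v; simpa using disj v
  · intro v w
    constructor
    · intro h
      have key : v ∈ component₁ ↔ w ∈ component₁ := by
        obtain ⟨p⟩ := h
        induction p with
        | nil => rfl
        | cons hadj _ ih => exact (adj_pres _ _ hadj).trans ih
      rcases cover v with hv | hv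
      · exact Or.inl ⟨hv, key.mp hv⟩
      · refine Or.inr ⟨hv, ?_⟩
        rcases cover w with hw | hw
        · exact absurd ⟨key.mpr hw, hv⟩ (disj v)
        · exact hw
    · rintro (⟨hv, hw⟩ | ⟨hv, hw⟩)
      · exact (reach_hub₁ v hv).trans (reach_hub₁ w hw).symm
      · exact (reach_hub₂ v hv).trans (reach_hub₂ w hw).symm
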